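/- Let f ∈ ℂ[x0,x1,x2,x3,x4] be quasi-homogeneous of degree 18 with respect to the weights (1,2,3,5,9) (family №100, X_18 ⊂ P(1,2,3,5,9)). If f is quasi-smooth, then the coefficient of the monomial x4^2 in f is nonzero and the coefficient of the monomial x2·x3^3 in f is nonzero. -/

import Mathlib

set_option maxHeartbeats 1000000

open MvPolynomial

/-- `f` is quasi-homogeneous of degree `d` with respect to the weights `a`:
every monomial occurring in `f` with nonzero coefficient has weighted degree `d`. -/
def IsQuasiHomogeneous (a : Fin 5 → ℕ) (d : ℕ) (f : MvPolynomial (Fin 5) ℂ) : Prop :=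
  ∀ m ∈ f.support, ∑ i, a i * m i = d

/-- `f` is quasi-smooth: at every nonzero point of the affine cone `{f = 0} ⊆ ℂ⁵`,
some partial derivative of `f` does not vanish. -/
def IsQuasiSmooth (f : MvPolynomial (Fin 5) ℂ) : Prop :=
  ∀ x : Fin 5 → ℂ, x ≠ 0 → eval x f = 0 → ∃ i, eval x (pderiv i f) ≠ 0

lemma eval_single_eq_zero (g : MvPolynomial (Fin 5) ℂ) (j : Fin 5)
    (h : ∀ m ∈ g.support, (∀ k, k ≠ j → m k = 0) → False) :
    eval (Pi.single j 1 : Fin 5 → ℂ) g = 0 := by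
  rw [eval_eq]
  refine Finset.sum_eq_zero fun m hm => ?_
  by_cases hc : ∀ k, k ≠ j → m k = 0
  · exact (h m hm hc).elim
  · push_neg at hc
    obtain ⟨k, hkj, hmk⟩ := hc
    have hz : (Pi.single j 1 : Fin 5 → ℂ) k ^ m k = 0 := by
      rw [Pi.single_eq_of_ne hkj]
      exact zero_pow hmk
    rw [Finset.prod_eq_zero (Finsupp.mem_support_iff.mpr hmk) hz, mul_zero]

lemma eval_pderiv_single_eq_zero (g : MvPolynomial (Fin 5) ℂ) (j i : Fin 5)
    (h : ∀ m ∈ g.support, m i ≠ 0 →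
      (∀ k, k ≠ j → ((m - Finsupp.single i 1 : Fin 5 →₀ ℕ)) k = 0) → False) :
    eval (Pi.single j 1 : Fin 5 → ℂ) (pderiv i g) = 0 := by
  conv_lhs => rw [g.as_sum, map_sum, map_sum]
  refine Finset.sum_eq_zero fun m hm => ?_
  rw [pderiv_monomial, eval_monomial]
  by_cases h1 : m i = 0
  · simp [h1]
  by_cases hc : ∀ k, k ≠ j → ((m - Finsupp.single i 1 : Fin 5 →₀ ℕ)) k = 0
  · exact (h m hm h1 hc).elim
  · push_neg at hc
    obtain ⟨k, hkj, hmk⟩ := hc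
    have hz : (Pi.single j 1 : Fin 5 → ℂ) k ^ ((m - Finsupp.single i 1 : Fin 5 →₀ ℕ)) k = 0 := by
      rw [Pi.single_eq_of_ne hkj]
      exact zero_pow hmk
    rw [Finsupp.prod, Finset.prod_eq_zero (Finsupp.mem_support_iff.mpr hmk) hz, mul_zero]

lemma wsum (m : Fin 5 →₀ ℕ) :
    ∑ k, (![1,2,3,5,9] : Fin 5 → ℕ) k * m k
      = m 0 + 2 * m 1 + 3 * m 2 + 5 * m 3 + 9 * m 4 := by
  rw [Fin.sum_univ_five]
  norm_num [Matrix.cons_val_zero, Matrix.cons_val_one, Matrix.head_cons]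
  rfl

theorem stmt_0 (f : MvPolynomial (Fin 5) ℂ)
    (hqh : IsQuasiHomogeneous ![1,2,3,5,9] 18 f)
    (hqs : IsQuasiSmooth f) :
    f.coeff (Finsupp.single (4 : Fin 5) 2) ≠ 0 ∧ f.coeff (Finsupp.single (2 : Fin 5) 1 + Finsupp.single (3 : Fin 5) 3) ≠ 0 := by
  constructor
  · -- coefficient of x4^2
    intro h0
    have hx : (Pi.single 4 1 : Fin 5 → ℂ) ≠ 0 := by
      intro h
      have := congrFun h 4
      simp at this
    have hev : eval (Pi.single 4 1 : Fin 5 → ℂ) f = 0 := by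
      refine eval_single_eq_zero f 4 fun m hm hz => ?_
      have hd := hqh m hm
      rw [wsum] at hd
      have h0' : m 0 = 0 := hz 0 (by decide)
      have h1' : m 1 = 0 := hz 1 (by decide)
      have h2' : m 2 = 0 := hz 2 (by decide)
      have h3' : m 3 = 0 := hz 3 (by decide)
      have h4' : m 4 = 2 := by omega
      have hme : m = Finsupp.single (4 : Fin 5) 2 := by
        ext k
        fin_cases k <;> simp [Finsupp.single_apply, h0', h1', h2', h3', h4']
      rw [mem_support_iff, hme] at hm
      exact hm h0
    obtain ⟨i, hi⟩ := hqs _ hx hev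
    apply hi
    have key : ∀ m ∈ f.support, m i ≠ 0 →
        (∀ k, k ≠ (4:Fin 5) → ((m - Finsupp.single i 1 : Fin 5 →₀ ℕ)) k = 0) → False := by
      intro m hm hmi hz
      have hd := hqh m hm
      rw [wsum] at hd
      have hz' : ∀ k, k ≠ (4:Fin 5) → m k - (Finsupp.single i 1) k = 0 := by
        intro k hk
        have := hz k hk
        rwa [Finsupp.tsub_apply] at this
      fin_cases i
      · have h0' : m 0 ≤ 1 := by have := hz' 0 (by decide); simp at this; omega
        have h1' : m 1 = 0 := by have := hz' 1 (by decide); simpa [Finsupp.single_apply] using this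
        have h2' : m 2 = 0 := by have := hz' 2 (by decide); simpa [Finsupp.single_apply] using this
        have h3' : m 3 = 0 := by have := hz' 3 (by decide); simpa [Finsupp.single_apply] using this
        have hmi' : m (0:Fin 5) ≠ 0 := hmi
        omega
      · have h0' : m 0 = 0 := by have := hz' 0 (by decide); simpa [Finsupp.single_apply] using this
        have h1' : m 1 ≤ 1 := by have := hz' 1 (by decide); simp at this; omega
        have h2' : m 2 = 0 := by have := hz' 2 (by decide); simpa [Finsupp.single_apply] using this
        have h3' : m 3 = 0 := by have := hz' 3 (by decide); simpa [Finsupp.single_apply] using this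
        have hmi' : m (1:Fin 5) ≠ 0 := hmi
        omega
      · have h0' : m 0 = 0 := by have := hz' 0 (by decide); simpa [Finsupp.single_apply] using this
        have h1' : m 1 = 0 := by have := hz' 1 (by decide); simpa [Finsupp.single_apply] using this
        have h2' : m 2 ≤ 1 := by have := hz' 2 (by decide); simp at this; omega
        have h3' : m 3 = 0 := by have := hz' 3 (by decide); simpa [Finsupp.single_apply] using this
        have hmi' : m (2:Fin 5) ≠ 0 := hmi
        omega
      · have h0' : m 0 = 0 := by have := hz' 0 (by decide); simpa [Finsupp.single_apply] using this
        have h1' : m 1 = 0 := by have := hz' 1 (by decide); simpa [Finsupp.single_apply] using this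
        have h2' : m 2 = 0 := by have := hz' 2 (by decide); simpa [Finsupp.single_apply] using this
        have h3' : m 3 ≤ 1 := by have := hz' 3 (by decide); simp at this; omega
        have hmi' : m (3:Fin 5) ≠ 0 := hmi
        omega
      · have h0' : m 0 = 0 := by have := hz' 0 (by decide); simpa [Finsupp.single_apply] using this
        have h1' : m 1 = 0 := by have := hz' 1 (by decide); simpa [Finsupp.single_apply] using this
        have h2' : m 2 = 0 := by have := hz' 2 (by decide); simpa [Finsupp.single_apply] using this
        have h3' : m 3 = 0 := by have := hz' 3 (by decide); simpa [Finsupp.single_apply] using this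
        have h4' : m 4 = 2 := by omega
        have hme : m = Finsupp.single (4 : Fin 5) 2 := by
          ext k
          fin_cases k <;> simp [Finsupp.single_apply, h0', h1', h2', h3', h4']
        rw [mem_support_iff, hme] at hm
        exact hm h0
    exact eval_pderiv_single_eq_zero f 4 i key
  · -- coefficient of x2 * x3^3
    intro h0
    have hx : (Pi.single 3 1 : Fin 5 → ℂ) ≠ 0 := by
      intro h
      have := congrFun h 3
      simp at this
    have hev : eval (Pi.single 3 1 : Fin 5 → ℂ) f = 0 := by
      refine eval_single_eq_zero f 3 fun m hm hz => ?_
      have hd := hqh m hm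
      rw [wsum] at hd
      have h0' : m 0 = 0 := hz 0 (by decide)
      have h1' : m 1 = 0 := hz 1 (by decide)
      have h2' : m 2 = 0 := hz 2 (by decide)
      have h4' : m 4 = 0 := hz 4 (by decide)
      omega
    obtain ⟨i, hi⟩ := hqs _ hx hev
    apply hi
    have key : ∀ m ∈ f.support, m i ≠ 0 →
        (∀ k, k ≠ (3:Fin 5) → ((m - Finsupp.single i 1 : Fin 5 →₀ ℕ)) k = 0) → False := by
      intro m hm hmi hz
      have hd := hqh m hm
      rw [wsum] at hd
      have hz' : ∀ k, k ≠ (3:Fin 5) → m k - (Finsupp.single i 1) k = 0 := by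
        intro k hk
        have := hz k hk
        rwa [Finsupp.tsub_apply] at this
      fin_cases i
      · have h0' : m 0 ≤ 1 := by have := hz' 0 (by decide); simp at this; omega
        have h1' : m 1 = 0 := by have := hz' 1 (by decide); simpa [Finsupp.single_apply] using this
        have h2' : m 2 = 0 := by have := hz' 2 (by decide); simpa [Finsupp.single_apply] using this
        have h4' : m 4 = 0 := by have := hz' 4 (by decide); simpa [Finsupp.single_apply] using this
        have hmi' : m (0:Fin 5) ≠ 0 := hmi
        omega
      · have h0' : m 0 = 0 := by have := hz' 0 (by decide); simpa [Finsupp.single_apply] using this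
        have h1' : m 1 ≤ 1 := by have := hz' 1 (by decide); simp at this; omega
        have h2' : m 2 = 0 := by have := hz' 2 (by decide); simpa [Finsupp.single_apply] using this
        have h4' : m 4 = 0 := by have := hz' 4 (by decide); simpa [Finsupp.single_apply] using this
        have hmi' : m (1:Fin 5) ≠ 0 := hmi
        omega
      · have h0' : m 0 = 0 := by have := hz' 0 (by decide); simpa [Finsupp.single_apply] using this
        have h1' : m 1 = 0 := by have := hz' 1 (by decide); simpa [Finsupp.single_apply] using this
        have h2' : m 2 ≤ 1 := by have := hz' 2 (by decide); simp at this; omega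
        have h4' : m 4 = 0 := by have := hz' 4 (by decide); simpa [Finsupp.single_apply] using this
        have h2e : m 2 = 1 := by  have hmi' : m (2:Fin 5) ≠ 0 := hmi; omega
        have h3' : m 3 = 3 := by omega
        have hme : m = Finsupp.single (2 : Fin 5) 1 + Finsupp.single (3 : Fin 5) 3 := by
          ext k
          fin_cases k <;> simp [Finsupp.single_apply, h0', h1', h2e, h3', h4']
        rw [mem_support_iff, hme] at hm
        exact hm h0
      · have h0' : m 0 = 0 := by have := hz' 0 (by decide); simpa [Finsupp.single_apply] using this
        have h1' : m 1 = 0 := by have := hz' 1 (by decide); simpa [Finsupp.single_apply] using this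
        have h2' : m 2 = 0 := by have := hz' 2 (by decide); simpa [Finsupp.single_apply] using this
        have h4' : m 4 = 0 := by have := hz' 4 (by decide); simpa [Finsupp.single_apply] using this
        have hmi' : m (3:Fin 5) ≠ 0 := hmi
        omega
      · have h0' : m 0 = 0 := by have := hz' 0 (by decide); simpa [Finsupp.single_apply] using this
        have h1' : m 1 = 0 := by have := hz' 1 (by decide); simpa [Finsupp.single_apply] using this
        have h2' : m 2 = 0 := by have := hz' 2 (by decide); simpa [Finsupp.single_apply] using this
        have h4' : m 4 ≤ 1 := by have := hz' 4 (by decide); simp at this; omega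
        have hmi' : m (4:Fin 5) ≠ 0 := hmi
        omega
    exact eval_pderiv_single_eq_zero f 3 i key
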